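/- Let 𝒮 be a split system on a finite set X with |X| ≥ 4. Then 𝒮 4-dices X if and only if for all 3-subsets A, B of X with |A ∩ B| = 2 there exists S ∈ 𝒮 with φ_A(S) ≠ φ_B(S). -/

import Mathlib

namespace InjectiveSplitSystems

open Finset

variable {α : Type*} [DecidableEq α]

/-- A split of `X`: an unordered bipartition of `X` into two nonempty disjoint parts,
represented as the two-element set `{A, B}` of its parts. -/
def IsSplit (X : Finset α) (S : Finset (Finset α)) : Prop :=
  ∃ A B : Finset α, S = {A, B} ∧ A ∪ B = X ∧ A ∩ B = ∅ ∧ A ≠ ∅ ∧ B ≠ ∅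

/-- `S` is an `r`-split of `X`: a split of `X` whose minimum part size is `r`. -/
def IsRSplit (X : Finset α) (r : ℕ) (S : Finset (Finset α)) : Prop :=
  IsSplit X S ∧ (∃ A ∈ S, A.card = r) ∧ ∀ A ∈ S, r ≤ A.card

/-- A split system on `X`: a set of splits of `X` containing all trivial splits
`{x} | X \ {x}`, `x ∈ X`. -/
def IsSplitSystem (X : Finset α) (𝒮 : Finset (Finset (Finset α))) : Prop :=
  (∀ S ∈ 𝒮, IsSplit X S) ∧ ∀ x ∈ X, ({{x}, X \ {x}} : Finset (Finset α)) ∈ 𝒮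

/-- `phiNe Y Y' S` says `φ_Y(S) ≠ φ_{Y'}(S)`: the part of `S` containing at least two
elements of the 3-set `Y` differs from the part of `S` containing at least two
elements of the 3-set `Y'`. -/
def phiNe (Y Y' : Finset α) (S : Finset (Finset α)) : Prop :=
  ∃ t ∈ S, ∃ t' ∈ S, t ≠ t' ∧ 2 ≤ (Y ∩ t).card ∧ 2 ≤ (Y' ∩ t').card

/-- A split system on `X` is injective if for all distinct 3-subsets `Y`, `Y'` of `X`
there is a split `S ∈ 𝒮` with `φ_Y(S) ≠ φ_{Y'}(S)`. -/
def IsInjective (X : Finset α) (𝒮 : Finset (Finset (Finset α))) : Prop :=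
  ∀ Y Y' : Finset α, Y ⊆ X → Y' ⊆ X → Y.card = 3 → Y'.card = 3 → Y ≠ Y' →
    ∃ S ∈ 𝒮, phiNe Y Y' S

/-- The restriction `S|_Y` of a split to `Y`, as the set of restricted parts. -/
def restrictSplit (S : Finset (Finset α)) (Y : Finset α) : Finset (Finset α) :=
  S.image (· ∩ Y)

open scoped Classical in
/-- The restriction `𝒮|_Y` of a split system to `Y`: all splits
`(A ∩ Y) | (B ∩ Y)` with `A|B ∈ 𝒮` and both intersections nonempty. -/
noncomputable def restrictSS (𝒮 : Finset (Finset (Finset α))) (Y : Finset α) :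
    Finset (Finset (Finset α)) :=
  (𝒮.image fun S => restrictSplit S Y).filter fun T => ∀ t ∈ T, t ≠ ∅

/-- `𝒮` 4-dices `X`. -/
def FourDices (X : Finset α) (𝒮 : Finset (Finset (Finset α))) : Prop :=
  X.card < 4 ∨ ∀ Y ⊆ X, Y.card = 4 →
    ∃ 𝒯 ⊆ restrictSS 𝒮 Y, 2 ≤ 𝒯.card ∧ ∀ S ∈ 𝒯, IsRSplit Y 2 S

/-- `𝒮` 5-dices `X`. -/
def FiveDices (X : Finset α) (𝒮 : Finset (Finset (Finset α))) : Prop :=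
  X.card < 5 ∨ ∀ Y ⊆ X, Y.card = 5 →
    ∃ 𝒯 ⊆ restrictSS 𝒮 Y, 5 ≤ 𝒯.card ∧ ∀ S ∈ 𝒯, IsRSplit Y 2 S

/-- `𝒮` 6-dices `X`: every 6-subset restriction contains a 3-split or a triangle
of 2-splits. -/
def SixDices (X : Finset α) (𝒮 : Finset (Finset (Finset α))) : Prop :=
  X.card < 6 ∨ ∀ Y ⊆ X, Y.card = 6 →
    (∃ S ∈ restrictSS 𝒮 Y, IsRSplit Y 3 S) ∨
    (∃ x ∈ Y, ∃ y ∈ Y, ∃ z ∈ Y, x ≠ y ∧ x ≠ z ∧ y ≠ z ∧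
      ({{x, y}, Y \ {x, y}} : Finset (Finset α)) ∈ restrictSS 𝒮 Y ∧
      ({{x, z}, Y \ {x, z}} : Finset (Finset α)) ∈ restrictSS 𝒮 Y ∧
      ({{y, z}, Y \ {y, z}} : Finset (Finset α)) ∈ restrictSS 𝒮 Y)

/-- Two splits are incompatible if they are distinct and all four pairwise
intersections of their parts are nonempty. -/
def Incompatible (S T : Finset (Finset α)) : Prop :=
  S ≠ T ∧ ∀ A ∈ S, ∀ B ∈ T, A ∩ B ≠ ∅

open scoped Classical in
/-- The dimension of a split system: maximum size of a pairwise incompatible subset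
(which is `1` when all splits are pairwise compatible and `𝒮` is nonempty). -/
noncomputable def dimSS (𝒮 : Finset (Finset (Finset α))) : ℕ :=
  (𝒮.powerset.filter fun 𝒯 => ∀ S ∈ 𝒯, ∀ T ∈ 𝒯, S ≠ T → Incompatible S T).sup Finset.card

/-- The injective dimension `ID(n)`: minimum dimension of an injective split system
on `{1, …, n}`. -/
noncomputable def ID (n : ℕ) : ℕ :=
  sInf {d : ℕ | ∃ 𝒮 : Finset (Finset (Finset ℕ)),
    IsSplitSystem (Finset.Icc 1 n) 𝒮 ∧ IsInjective (Finset.Icc 1 n) 𝒮 ∧ dimSS 𝒮 = d}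

/-- The injective 2-split dimension `ID₂(n)`: minimum dimension of an injective split
system on `{1, …, n}` all of whose non-trivial splits have size 2. -/
noncomputable def ID2 (n : ℕ) : ℕ :=
  sInf {d : ℕ | ∃ 𝒮 : Finset (Finset (Finset ℕ)),
    IsSplitSystem (Finset.Icc 1 n) 𝒮 ∧ IsInjective (Finset.Icc 1 n) 𝒮 ∧
    (∀ S ∈ 𝒮, IsRSplit (Finset.Icc 1 n) 1 S ∨ IsRSplit (Finset.Icc 1 n) 2 S) ∧
    dimSS 𝒮 = d}

/-- `𝒮` is rooted-injective relative to `r`. -/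
def IsRootedInjective (X : Finset α) (r : α) (𝒮 : Finset (Finset (Finset α))) : Prop :=
  ∀ Z Z' : Finset α, Z ⊆ X \ {r} → Z' ⊆ X \ {r} → Z.card = 2 → Z'.card = 2 → Z ≠ Z' →
    ∃ S ∈ 𝒮, phiNe (insert r Z) (insert r Z') S

/-- The rooted-injective dimension `ID^r(n)`: minimum dimension of a split system on an
`n`-element set that is rooted-injective relative to a given element. -/
noncomputable def IDr (n : ℕ) : ℕ :=
  sInf {d : ℕ | ∃ 𝒮 : Finset (Finset (Finset ℕ)),
    IsSplitSystem (Finset.Icc 1 n) 𝒮 ∧ IsRootedInjective (Finset.Icc 1 n) 1 𝒮 ∧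
    dimSS 𝒮 = d}

/-- `𝒮` is circular: there is a labelling `x_1, …, x_n` of `X` such that every split
of `𝒮` has the form `{x_i, …, x_j} | complement`. -/
def IsCircular (X : Finset α) (𝒮 : Finset (Finset (Finset α))) : Prop :=
  ∃ f : ℕ → α, Set.InjOn f ↑(Finset.Icc 1 X.card) ∧
    (Finset.Icc 1 X.card).image f = X ∧
    ∀ S ∈ 𝒮, ∃ i j : ℕ, 1 ≤ i ∧ i ≤ j ∧ j ≤ X.card ∧
      S = {(Finset.Icc i j).image f, X \ (Finset.Icc i j).image f}

/-- `𝒮` is maximal circular: circular and not properly contained in any circular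
split system on `X`. -/
def IsMaximalCircular (X : Finset α) (𝒮 : Finset (Finset (Finset α))) : Prop :=
  IsCircular X 𝒮 ∧ ∀ 𝒮' : Finset (Finset (Finset α)),
    IsSplitSystem X 𝒮' → IsCircular X 𝒮' → 𝒮 ⊆ 𝒮' → 𝒮' = 𝒮

/-- The degree of `x` in the graph `P(𝒮)` on vertex set `X` whose edges are the
pairs `{x, y}` with `xy | X − {x,y} ∈ 𝒮`. -/
def degP (X : Finset α) (𝒮 : Finset (Finset (Finset α))) (x : α) : ℕ :=
  ((X \ {x}).filter fun y => ({{x, y}, X \ {x, y}} : Finset (Finset α)) ∈ 𝒮).card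

/-- `P(𝒮)` contains a 3-clique. -/
def HasTriangle (X : Finset α) (𝒮 : Finset (Finset (Finset α))) : Prop :=
  ∃ x ∈ X, ∃ y ∈ X, ∃ z ∈ X, x ≠ y ∧ x ≠ z ∧ y ≠ z ∧
    ({{x, y}, X \ {x, y}} : Finset (Finset α)) ∈ 𝒮 ∧
    ({{x, z}, X \ {x, z}} : Finset (Finset α)) ∈ 𝒮 ∧
    ({{y, z}, X \ {y, z}} : Finset (Finset α)) ∈ 𝒮

/-- Conditions (B1) and (B2) for a map to be a vertex of the Buneman graph. -/
def IsBunemanVertex (𝒮 : Finset (Finset (Finset α))) (φ : {S // S ∈ 𝒮} → Finset α) : Prop :=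
  (∀ S, φ S ∈ S.1) ∧ ∀ S S', S ≠ S' → (φ S ∩ φ S').Nonempty

/-- The vertex set of the Buneman graph `B(𝒮)`. -/
abbrev BunemanVertex (𝒮 : Finset (Finset (Finset α))) : Type _ :=
  {φ : {S // S ∈ 𝒮} → Finset α // IsBunemanVertex 𝒮 φ}

/-- The Buneman graph `B(𝒮)`: two vertices are adjacent iff they differ on exactly
one split. -/
def BunemanGraph (𝒮 : Finset (Finset (Finset α))) : SimpleGraph (BunemanVertex 𝒮) where
  Adj φ ψ := ∃! S, φ.1 S ≠ ψ.1 S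
  symm := by
    constructor
    rintro φ ψ ⟨S, hS, hU⟩
    exact ⟨S, hS.symm, fun T hT => hU T hT.symm⟩
  loopless := by
    constructor
    rintro φ ⟨S, hS, -⟩
    exact hS rfl

/-- `m` is a median of `u`, `v`, `w` in the graph `G`. -/
def IsMedian {V : Type*} (G : SimpleGraph V) (u v w m : V) : Prop :=
  G.dist u m + G.dist m v = G.dist u v ∧
  G.dist v m + G.dist m w = G.dist v w ∧
  G.dist u m + G.dist m w = G.dist u w



section Statement10Helpers

private lemma two_le_card_of_pair {x y : α} {s : Finset α} (hxy : x ≠ y)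
    (hx : x ∈ s) (hy : y ∈ s) : 2 ≤ s.card :=
  Finset.one_lt_card.2 ⟨x, hx, y, hy, hxy⟩

private lemma restrictSplit_pair (t t' Y : Finset α) :
    restrictSplit ({t, t'} : Finset (Finset α)) Y = {t ∩ Y, t' ∩ Y} := by
  simp [restrictSplit]

private lemma mem_restrictSS' {𝒮 : Finset (Finset (Finset α))} {Y : Finset α}
    {T : Finset (Finset α)} :
    T ∈ restrictSS 𝒮 Y ↔ (∃ S ∈ 𝒮, restrictSplit S Y = T) ∧ ∀ t ∈ T, t ≠ ∅ := by
  classical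
  simp [restrictSS, Finset.mem_filter, Finset.mem_image]

private lemma card_restrict_parts {t t' Y X : Finset α} (hu : t ∪ t' = X)
    (hd : t ∩ t' = ∅) (hYX : Y ⊆ X) :
    (t ∩ Y).card + (t' ∩ Y).card = Y.card := by
  rw [← Finset.card_union_of_disjoint]
  · congr 1
    rw [← Finset.union_inter_distrib_right, hu, Finset.inter_eq_right.2 hYX]
  · rw [Finset.disjoint_iff_inter_eq_empty, Finset.inter_inter_inter_comm, hd,
      Finset.empty_inter]

private lemma card_three' {x y z : α} (h1 : x ≠ y) (h2 : x ≠ z) (h3 : y ≠ z) :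
    ({x, y, z} : Finset α).card = 3 :=
  Finset.card_eq_three.2 ⟨x, y, z, h1, h2, h3, rfl⟩

private lemma card_eq_four' {s : Finset α} (h : s.card = 4) :
    ∃ a b c d : α, a ≠ b ∧ a ≠ c ∧ a ≠ d ∧ b ≠ c ∧ b ≠ d ∧ c ≠ d ∧ s = {a, b, c, d} := by
  obtain ⟨a, ha⟩ := Finset.card_pos.1 (by omega : 0 < s.card)
  have h3 : (s.erase a).card = 3 := by rw [Finset.card_erase_of_mem ha, h]
  obtain ⟨b, c, d, hbc, hbd, hcd, heq⟩ := Finset.card_eq_three.1 h3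
  have hb : b ∈ s.erase a := by rw [heq]; simp
  have hc : c ∈ s.erase a := by rw [heq]; simp
  have hd : d ∈ s.erase a := by rw [heq]; simp
  refine ⟨a, b, c, d, (Finset.mem_erase.1 hb).1.symm, (Finset.mem_erase.1 hc).1.symm,
    (Finset.mem_erase.1 hd).1.symm, hbc, hbd, hcd, ?_⟩
  rw [← Finset.insert_erase ha, heq]

private lemma inter_three {a b u v : α} (hua : u ≠ a) (hub : u ≠ b) (hva : v ≠ a)
    (hvb : v ≠ b) (huv : u ≠ v) :
    ({a, b, u} : Finset α) ∩ {a, b, v} = {a, b} := by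
  ext x
  simp only [Finset.mem_inter, Finset.mem_insert, Finset.mem_singleton]
  constructor
  · rintro ⟨rfl | rfl | rfl, h⟩
    · exact Or.inl rfl
    · exact Or.inr rfl
    · rcases h with rfl | rfl | rfl
      · exact absurd rfl hua
      · exact absurd rfl hub
      · exact absurd rfl huv
  · rintro (rfl | rfl) <;> simp

private lemma core2 {t t' Y : Finset α} {a b c d : α}
    (hab : a ≠ b) (hac : a ≠ c) (had : a ≠ d) (hbc : b ≠ c) (hbd : b ≠ d) (hcd : c ≠ d)
    (hY : Y = {a, b, c, d}) (hd : t ∩ t' = ∅) (hYu : Y ⊆ t ∪ t')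
    (hat : a ∈ t) (hbt' : b ∈ t')
    (h2 : (t ∩ Y).card = 2) :
    (2 ≤ (({a, b, c} : Finset α) ∩ t).card ∧ 2 ≤ (({a, b, d} : Finset α) ∩ t').card) ∨
    (2 ≤ (({a, b, d} : Finset α) ∩ t).card ∧ 2 ≤ (({a, b, c} : Finset α) ∩ t').card) := by
  have haY : a ∈ Y := by rw [hY]; simp
  have hcY : c ∈ Y := by rw [hY]; simp
  have hdY : d ∈ Y := by rw [hY]; simp
  have hdisj : ∀ x, x ∈ t → x ∈ t' → False := by
    intro x h1 h2'
    have hx : x ∈ t ∩ t' := Finset.mem_inter.2 ⟨h1, h2'⟩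
    rw [hd] at hx
    exact absurd hx (Finset.notMem_empty x)
  obtain ⟨x, y, hxy, hxyeq⟩ := Finset.card_eq_two.1 h2
  have haty : a ∈ ({x, y} : Finset α) := hxyeq ▸ Finset.mem_inter.2 ⟨hat, haY⟩
  obtain ⟨z, hz, htY⟩ : ∃ z, z ≠ a ∧ t ∩ Y = {a, z} := by
    rcases Finset.mem_insert.1 haty with rfl | h
    · exact ⟨y, hxy.symm, hxyeq⟩
    · rcases Finset.mem_singleton.1 h with rfl
      exact ⟨x, hxy, hxyeq.trans (Finset.pair_comm x a)⟩
  have hzmem : z ∈ t ∩ Y := by rw [htY]; simp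
  have hzt : z ∈ t := (Finset.mem_inter.1 hzmem).1
  have hzY : z ∈ Y := (Finset.mem_inter.1 hzmem).2
  have hzb : z ≠ b := fun h => hdisj b (h ▸ hzt) hbt'
  have hz4 : z = c ∨ z = d := by
    rw [hY] at hzY
    simp at hzY
    tauto
  rcases hz4 with rfl | rfl
  · left
    constructor
    · exact two_le_card_of_pair hac (by simp [hat]) (by simp [hzt])
    · have hdt' : d ∈ t' := by
        rcases Finset.mem_union.1 (hYu hdY) with h | h
        · exfalso
          have : d ∈ t ∩ Y := Finset.mem_inter.2 ⟨h, hdY⟩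
          rw [htY] at this
          simp at this
          tauto
        · exact h
      exact two_le_card_of_pair hbd (by simp [hbt']) (by simp [hdt'])
  · right
    constructor
    · exact two_le_card_of_pair had (by simp [hat]) (by simp [hzt])
    · have hct' : c ∈ t' := by
        rcases Finset.mem_union.1 (hYu hcY) with h | h
        · exfalso
          have : c ∈ t ∩ Y := Finset.mem_inter.2 ⟨h, hcY⟩
          rw [htY] at this
          simp at this
          tauto
        · exact h
      exact two_le_card_of_pair hbc (by simp [hbt']) (by simp [hct'])

private lemma partition_pair {t t' Y : Finset α} {a b c d : α}
    (hca : c ≠ a) (hcb : c ≠ b) (hda : d ≠ a) (hdb : d ≠ b) (hcd : c ≠ d) (hab : a ≠ b)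
    (hY : Y = {a, b, c, d})
    (hYsub : Y ⊆ t ∪ t')
    (hct : (t ∩ Y).card = 2) (hct' : (t' ∩ Y).card = 2)
    (h1 : a ∈ t) (h2 : b ∈ t) :
    t ∩ Y = {a, b} ∧ t' ∩ Y = {c, d} := by
  have haY : a ∈ Y := by rw [hY]; simp
  have hbY : b ∈ Y := by rw [hY]; simp
  have hcY : c ∈ Y := by rw [hY]; simp
  have hdY : d ∈ Y := by rw [hY]; simp
  have hsub : ({a, b} : Finset α) ⊆ t ∩ Y := by
    intro x hx
    simp only [Finset.mem_insert, Finset.mem_singleton] at hx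
    rcases hx with rfl | rfl
    · exact Finset.mem_inter.2 ⟨h1, haY⟩
    · exact Finset.mem_inter.2 ⟨h2, hbY⟩
  have e1 : t ∩ Y = {a, b} :=
    (Finset.eq_of_subset_of_card_le hsub (by rw [hct, Finset.card_pair hab])).symm
  have hctt' : c ∈ t' := by
    rcases Finset.mem_union.1 (hYsub hcY) with h | h
    · exfalso
      have : c ∈ t ∩ Y := Finset.mem_inter.2 ⟨h, hcY⟩
      rw [e1] at this
      simp at this
      tauto
    · exact h
  have hdtt' : d ∈ t' := by
    rcases Finset.mem_union.1 (hYsub hdY) with h | h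
    · exfalso
      have : d ∈ t ∩ Y := Finset.mem_inter.2 ⟨h, hdY⟩
      rw [e1] at this
      simp at this
      tauto
    · exact h
  have hsub' : ({c, d} : Finset α) ⊆ t' ∩ Y := by
    intro x hx
    simp only [Finset.mem_insert, Finset.mem_singleton] at hx
    rcases hx with rfl | rfl
    · exact Finset.mem_inter.2 ⟨hctt', hcY⟩
    · exact Finset.mem_inter.2 ⟨hdtt', hdY⟩
  exact ⟨e1, (Finset.eq_of_subset_of_card_le hsub' (by rw [hct', Finset.card_pair hcd])).symm⟩

private lemma fwd {X Y : Finset α} {𝒮 : Finset (Finset (Finset α))}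
    (hsp : ∀ S ∈ 𝒮, IsSplit X S)
    {a b c d : α}
    (hab : a ≠ b) (hac : a ≠ c) (had : a ≠ d) (hbc : b ≠ c) (hbd : b ≠ d) (hcd : c ≠ d)
    (hYeq : Y = {a, b, c, d}) (hYX : Y ⊆ X)
    {T : Finset (Finset α)} (hTmem : T ∈ restrictSS 𝒮 Y) (hT2 : IsRSplit Y 2 T)
    (hTne : T ≠ {{a, b}, {c, d}}) :
    ∃ S ∈ 𝒮, phiNe {a, b, c} {a, b, d} S := by
  obtain ⟨⟨S, hS, hrest⟩, -⟩ := mem_restrictSS'.1 hTmem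
  obtain ⟨t, t', hSeq, hu, hdis, hne, hne'⟩ := hsp S hS
  have hTeq : T = {t ∩ Y, t' ∩ Y} := by rw [← hrest, hSeq, restrictSplit_pair]
  have hY4 : Y.card = 4 := by
    rw [hYeq, Finset.card_insert_of_notMem (by simp [hab, hac, had]),
      Finset.card_insert_of_notMem (by simp [hbc, hbd]),
      Finset.card_insert_of_notMem (by simp [hcd]), Finset.card_singleton]
  have hsum := card_restrict_parts hu hdis hYX
  have h2t : 2 ≤ (t ∩ Y).card := hT2.2.2 _ (by rw [hTeq]; simp)
  have h2t' : 2 ≤ (t' ∩ Y).card := hT2.2.2 _ (by rw [hTeq]; simp)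
  have hct : (t ∩ Y).card = 2 := by omega
  have hct' : (t' ∩ Y).card = 2 := by omega
  have htne : t ≠ t' := by
    intro h
    rw [h, Finset.inter_self] at hdis
    exact hne' hdis
  have hYsub : Y ⊆ t ∪ t' := hu ▸ hYX
  have haY : a ∈ Y := by rw [hYeq]; simp
  have hbY : b ∈ Y := by rw [hYeq]; simp
  have hnb1 : ¬(a ∈ t ∧ b ∈ t) := by
    rintro ⟨h1, h2⟩
    obtain ⟨e1, e2⟩ := partition_pair hac.symm hbc.symm had.symm hbd.symm hcd hab hYeq
      hYsub hct hct' h1 h2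
    exact hTne (by rw [hTeq, e1, e2])
  have hnb2 : ¬(a ∈ t' ∧ b ∈ t') := by
    rintro ⟨h1, h2⟩
    obtain ⟨e1, e2⟩ := partition_pair hac.symm hbc.symm had.symm hbd.symm hcd hab hYeq
      (by rw [Finset.union_comm]; exact hYsub) hct' hct h1 h2
    exact hTne (by rw [hTeq, e1, e2, Finset.pair_comm])
  rcases Finset.mem_union.1 (hYsub haY) with hat | hat'
  · have hbt' : b ∈ t' := by
      rcases Finset.mem_union.1 (hYsub hbY) with h | h
      · exact absurd ⟨hat, h⟩ hnb1
      · exact h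
    rcases core2 hab hac had hbc hbd hcd hYeq hdis hYsub hat hbt' hct with ⟨hA, hB⟩ | ⟨hB, hA⟩
    · exact ⟨S, hS, t, by rw [hSeq]; simp, t', by rw [hSeq]; simp, htne, hA, hB⟩
    · exact ⟨S, hS, t', by rw [hSeq]; simp, t, by rw [hSeq]; simp, htne.symm, hA, hB⟩
  · have hbt : b ∈ t := by
      rcases Finset.mem_union.1 (hYsub hbY) with h | h
      · exact h
      · exact absurd ⟨hat', h⟩ hnb2
    rcases core2 hab hac had hbc hbd hcd hYeq (by rw [Finset.inter_comm]; exact hdis)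
        (by rw [Finset.union_comm]; exact hYsub) hat' hbt hct' with ⟨hA, hB⟩ | ⟨hB, hA⟩
    · exact ⟨S, hS, t', by rw [hSeq]; simp, t, by rw [hSeq]; simp, htne.symm, hA, hB⟩
    · exact ⟨S, hS, t, by rw [hSeq]; simp, t', by rw [hSeq]; simp, htne, hA, hB⟩

private lemma bwd {X Y : Finset α} {𝒮 : Finset (Finset (Finset α))}
    (hsp : ∀ S ∈ 𝒮, IsSplit X S)
    {a b c d : α}
    (hab : a ≠ b) (hac : a ≠ c) (had : a ≠ d) (hbc : b ≠ c) (hbd : b ≠ d) (hcd : c ≠ d)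
    (hYeq : Y = {a, b, c, d}) (hYX : Y ⊆ X)
    {S : Finset (Finset α)} (hS : S ∈ 𝒮) (hphi : phiNe {a, b, c} {a, b, d} S) :
    ∃ T ∈ restrictSS 𝒮 Y, IsRSplit Y 2 T ∧ ∀ u ∈ T, ¬(a ∈ u ∧ b ∈ u) := by
  obtain ⟨t0, t0', hSeq0, hu0, hd0, hne0, hne0'⟩ := hsp S hS
  obtain ⟨s, hs, s', hs', hss', hA0, hB0⟩ := hphi
  obtain ⟨u, v, hSeq, hu, hd, hA, hB⟩ : ∃ u v : Finset α, S = {u, v} ∧ u ∪ v = X ∧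
      u ∩ v = ∅ ∧ 2 ≤ (({a, b, c} : Finset α) ∩ u).card ∧
      2 ≤ (({a, b, d} : Finset α) ∩ v).card := by
    rw [hSeq0] at hs hs'
    simp only [Finset.mem_insert, Finset.mem_singleton] at hs hs'
    rcases hs with rfl | rfl <;> rcases hs' with rfl | rfl
    · exact absurd rfl hss'
    · exact ⟨s, s', hSeq0, hu0, hd0, hA0, hB0⟩
    · exact ⟨s, s', hSeq0.trans (Finset.pair_comm _ _), by rw [Finset.union_comm]; exact hu0,
        by rw [Finset.inter_comm]; exact hd0, hA0, hB0⟩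
    · exact absurd rfl hss'
  have hY4 : Y.card = 4 := by
    rw [hYeq, Finset.card_insert_of_notMem (by simp [hab, hac, had]),
      Finset.card_insert_of_notMem (by simp [hbc, hbd]),
      Finset.card_insert_of_notMem (by simp [hcd]), Finset.card_singleton]
  have hsum := card_restrict_parts hu hd hYX
  have hAY : ({a, b, c} : Finset α) ⊆ Y := by
    rw [hYeq]; intro x hx; simp only [Finset.mem_insert, Finset.mem_singleton] at hx ⊢; tauto
  have hBY : ({a, b, d} : Finset α) ⊆ Y := by
    rw [hYeq]; intro x hx; simp only [Finset.mem_insert, Finset.mem_singleton] at hx ⊢; tauto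
  have h2u : 2 ≤ (u ∩ Y).card := le_trans hA (Finset.card_le_card fun x hx =>
    Finset.mem_inter.2 ⟨(Finset.mem_inter.1 hx).2, hAY (Finset.mem_inter.1 hx).1⟩)
  have h2v : 2 ≤ (v ∩ Y).card := le_trans hB (Finset.card_le_card fun x hx =>
    Finset.mem_inter.2 ⟨(Finset.mem_inter.1 hx).2, hBY (Finset.mem_inter.1 hx).1⟩)
  have hcu : (u ∩ Y).card = 2 := by omega
  have hcv : (v ∩ Y).card = 2 := by omega
  have hdisj : ∀ x, x ∈ u → x ∈ v → False := by
    intro x h1 h2'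
    have hx : x ∈ u ∩ v := Finset.mem_inter.2 ⟨h1, h2'⟩
    rw [hd] at hx
    exact absurd hx (Finset.notMem_empty x)
  refine ⟨{u ∩ Y, v ∩ Y}, ?_, ⟨⟨u ∩ Y, v ∩ Y, rfl, ?_, ?_, ?_, ?_⟩,
      ⟨u ∩ Y, by simp, hcu⟩, ?_⟩, ?_⟩
  · rw [mem_restrictSS']
    refine ⟨⟨S, hS, by rw [hSeq, restrictSplit_pair]⟩, ?_⟩
    intro w hw
    simp only [Finset.mem_insert, Finset.mem_singleton] at hw
    rcases hw with rfl | rfl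
    · intro h0; rw [h0] at hcu; simp at hcu
    · intro h0; rw [h0] at hcv; simp at hcv
  · rw [← Finset.union_inter_distrib_right, hu, Finset.inter_eq_right.2 hYX]
  · rw [Finset.inter_inter_inter_comm, hd, Finset.empty_inter]
  · intro h0; rw [h0] at hcu; simp at hcu
  · intro h0; rw [h0] at hcv; simp at hcv
  · intro w hw
    simp only [Finset.mem_insert, Finset.mem_singleton] at hw
    rcases hw with rfl | rfl
    · exact hcu.ge
    · exact hcv.ge
  · rintro w hw ⟨haw, hbw⟩
    simp only [Finset.mem_insert, Finset.mem_singleton] at hw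
    rcases hw with rfl | rfl
    · have hsubd : ({a, b, d} : Finset α) ∩ v ⊆ {d} := by
        intro x hx
        simp only [Finset.mem_inter, Finset.mem_insert, Finset.mem_singleton] at hx ⊢
        rcases hx.1 with rfl | rfl | rfl
        · exact (hdisj _ (Finset.mem_inter.1 haw).1 hx.2).elim
        · exact (hdisj _ (Finset.mem_inter.1 hbw).1 hx.2).elim
        · rfl
      have := Finset.card_le_card hsubd
      rw [Finset.card_singleton] at this
      omega
    · have hsubc : ({a, b, c} : Finset α) ∩ u ⊆ {c} := by
        intro x hx
        simp only [Finset.mem_inter, Finset.mem_insert, Finset.mem_singleton] at hx ⊢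
        rcases hx.1 with rfl | rfl | rfl
        · exact (hdisj _ hx.2 (Finset.mem_inter.1 haw).1).elim
        · exact (hdisj _ hx.2 (Finset.mem_inter.1 hbw).1).elim
        · rfl
      have := Finset.card_le_card hsubc
      rw [Finset.card_singleton] at this
      omega

end Statement10Helpers

/-- For a split system `𝒮` on `X` (`|X| ≥ 4`): `𝒮` 4-dices `X` iff
for all 3-subsets `A, B` of `X` with `|A ∩ B| = 2` we have `φ_A ≠ φ_B`. -/
theorem statement10 (X : Finset α) (hX : 4 ≤ X.card)
    (𝒮 : Finset (Finset (Finset α))) (h𝒮 : IsSplitSystem X 𝒮) :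
    FourDices X 𝒮 ↔
      ∀ A B : Finset α, A ⊆ X → B ⊆ X → A.card = 3 → B.card = 3 → (A ∩ B).card = 2 →
        ∃ S ∈ 𝒮, phiNe A B S := by
  obtain ⟨hsp, -⟩ := h𝒮
  constructor
  · intro h4 A B hAX hBX hA3 hB3 hAB2
    obtain ⟨a, b, hab, hABeq⟩ := Finset.card_eq_two.1 hAB2
    have hcA : (A \ B).card = 1 := by
      have := Finset.card_inter_add_card_sdiff A B
      omega
    have hcB : (B \ A).card = 1 := by
      have := Finset.card_inter_add_card_sdiff B A
      rw [Finset.inter_comm] at this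
      omega
    obtain ⟨c, hc⟩ := Finset.card_eq_one.1 hcA
    obtain ⟨d, hd⟩ := Finset.card_eq_one.1 hcB
    have hcAB : c ∈ A ∧ c ∉ B := by
      have : c ∈ A \ B := by rw [hc]; simp
      exact Finset.mem_sdiff.1 this
    have hdBA : d ∈ B ∧ d ∉ A := by
      have : d ∈ B \ A := by rw [hd]; simp
      exact Finset.mem_sdiff.1 this
    have haAB : a ∈ A ∧ a ∈ B := by
      have : a ∈ A ∩ B := by rw [hABeq]; simp
      exact Finset.mem_inter.1 this
    have hbAB : b ∈ A ∧ b ∈ B := by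
      have : b ∈ A ∩ B := by rw [hABeq]; simp
      exact Finset.mem_inter.1 this
    have hac : a ≠ c := fun h => hcAB.2 (h ▸ haAB.2)
    have hbc : b ≠ c := fun h => hcAB.2 (h ▸ hbAB.2)
    have had : a ≠ d := fun h => hdBA.2 (h ▸ haAB.1)
    have hbd : b ≠ d := fun h => hdBA.2 (h ▸ hbAB.1)
    have hcd : c ≠ d := fun h => hdBA.2 (h ▸ hcAB.1)
    have hAeq : A = {a, b, c} := by
      ext x
      simp only [Finset.mem_insert, Finset.mem_singleton]
      constructor
      · intro hx
        by_cases hxB : x ∈ B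
        · have : x ∈ A ∩ B := Finset.mem_inter.2 ⟨hx, hxB⟩
          rw [hABeq] at this
          simp only [Finset.mem_insert, Finset.mem_singleton] at this
          tauto
        · have : x ∈ A \ B := Finset.mem_sdiff.2 ⟨hx, hxB⟩
          rw [hc] at this
          simp only [Finset.mem_singleton] at this
          tauto
      · rintro (rfl | rfl | rfl)
        exacts [haAB.1, hbAB.1, hcAB.1]
    have hBeq : B = {a, b, d} := by
      ext x
      simp only [Finset.mem_insert, Finset.mem_singleton]
      constructor
      · intro hx
        by_cases hxA : x ∈ A
        · have : x ∈ A ∩ B := Finset.mem_inter.2 ⟨hxA, hx⟩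
          rw [hABeq] at this
          simp only [Finset.mem_insert, Finset.mem_singleton] at this
          tauto
        · have : x ∈ B \ A := Finset.mem_sdiff.2 ⟨hx, hxA⟩
          rw [hd] at this
          simp only [Finset.mem_singleton] at this
          tauto
      · rintro (rfl | rfl | rfl)
        exacts [haAB.2, hbAB.2, hdBA.1]
    have hYeq : A ∪ B = {a, b, c, d} := by
      rw [hAeq, hBeq]
      ext x
      simp only [Finset.mem_union, Finset.mem_insert, Finset.mem_singleton]
      tauto
    have hYX : A ∪ B ⊆ X := Finset.union_subset hAX hBX
    have hY4 : (A ∪ B).card = 4 := by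
      have h5 := Finset.card_union_add_card_inter A B
      omega
    rcases h4 with h4 | h4
    · omega
    obtain ⟨𝒯, h𝒯sub, h𝒯card, h𝒯all⟩ := h4 (A ∪ B) hYX hY4
    obtain ⟨T₁, hT₁, T₂, hT₂, hT12⟩ := Finset.one_lt_card.1 h𝒯card
    rw [hAeq, hBeq]
    by_cases hT : T₁ = {{a, b}, {c, d}}
    · exact fwd hsp hab hac had hbc hbd hcd hYeq hYX (h𝒯sub hT₂) (h𝒯all _ hT₂)
        (fun h => hT12 (hT.trans h.symm))
    · exact fwd hsp hab hac had hbc hbd hcd hYeq hYX (h𝒯sub hT₁) (h𝒯all _ hT₁) hT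
  · intro h
    refine Or.inr fun Y hYX hY4 => ?_
    obtain ⟨a, b, c, d, hab, hac, had, hbc, hbd, hcd, hYeq⟩ := card_eq_four' hY4
    have hsubY : ∀ x y z : α, x ∈ Y → y ∈ Y → z ∈ Y → ({x, y, z} : Finset α) ⊆ X := by
      intro x y z hx hy hz w hw
      simp only [Finset.mem_insert, Finset.mem_singleton] at hw
      rcases hw with rfl | rfl | rfl
      exacts [hYX hx, hYX hy, hYX hz]
    have haY : a ∈ Y := by rw [hYeq]; simp
    have hbY : b ∈ Y := by rw [hYeq]; simp
    have hcY : c ∈ Y := by rw [hYeq]; simp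
    have hdY : d ∈ Y := by rw [hYeq]; simp
    obtain ⟨S₁, hS₁, hphi₁⟩ := h {a, b, c} {a, b, d} (hsubY a b c haY hbY hcY)
      (hsubY a b d haY hbY hdY) (card_three' hab hac hbc) (card_three' hab had hbd)
      (by rw [inter_three hac.symm hbc.symm had.symm hbd.symm hcd]
          exact Finset.card_pair hab)
    obtain ⟨S₂, hS₂, hphi₂⟩ := h {a, c, b} {a, c, d} (hsubY a c b haY hcY hbY)
      (hsubY a c d haY hcY hdY) (card_three' hac hab hbc.symm) (card_three' hac had hcd)
      (by rw [inter_three hab.symm hbc had.symm hcd.symm hbd]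
          exact Finset.card_pair hac)
    obtain ⟨S₃, hS₃, hphi₃⟩ := h {a, d, b} {a, d, c} (hsubY a d b haY hdY hbY)
      (hsubY a d c haY hdY hcY) (card_three' had hab hbd.symm) (card_three' had hac hcd.symm)
      (by rw [inter_three hab.symm hbd hac.symm hcd hbc]
          exact Finset.card_pair had)
    have hYeq2 : Y = {a, c, b, d} := by
      rw [hYeq]
      ext x
      simp only [Finset.mem_insert, Finset.mem_singleton]
      tauto
    have hYeq3 : Y = {a, d, b, c} := by
      rw [hYeq]
      ext x
      simp only [Finset.mem_insert, Finset.mem_singleton]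
      tauto
    obtain ⟨T₁, hT₁mem, hT₁2, hsep₁⟩ := bwd hsp hab hac had hbc hbd hcd hYeq hYX hS₁ hphi₁
    obtain ⟨T₂, hT₂mem, hT₂2, hsep₂⟩ := bwd hsp hac hab had hbc.symm hcd hbd hYeq2 hYX hS₂ hphi₂
    obtain ⟨T₃, hT₃mem, hT₃2, hsep₃⟩ := bwd hsp had hab hac hbd.symm hcd.symm hbc hYeq3 hYX
      hS₃ hphi₃
    have hne : T₁ ≠ T₂ ∨ T₁ ≠ T₃ := by
      by_contra hcon
      push_neg at hcon
      obtain ⟨h12, h13⟩ := hcon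
      obtain ⟨⟨P, Q, hPQ, hPQu, hPQd, hPne, hQne⟩, -, hall⟩ := hT₁2
      have hPc : 2 ≤ P.card := hall P (by rw [hPQ]; simp)
      have hQc : 2 ≤ Q.card := hall Q (by rw [hPQ]; simp)
      have hsum : P.card + Q.card = 4 := by
        rw [← Finset.card_union_of_disjoint (Finset.disjoint_iff_inter_eq_empty.2 hPQd),
          hPQu, hY4]
      have key : ∀ u ∈ T₁, ¬(a ∈ u ∧ b ∈ u) ∧ ¬(a ∈ u ∧ c ∈ u) ∧ ¬(a ∈ u ∧ d ∈ u) :=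
        fun u hu => ⟨hsep₁ u hu, hsep₂ u (h12 ▸ hu), hsep₃ u (h13 ▸ hu)⟩
      have main : ∀ u v : Finset α, T₁ = {u, v} → u ∪ v = Y → v.card ≤ 2 → a ∈ u → False := by
        intro u v hTuv huv hvc hau
        have hmem : ∀ x, x ∈ Y → x ∉ u → x ∈ v := by
          intro x hx hxu
          have hx' : x ∈ u ∪ v := huv ▸ hx
          rcases Finset.mem_union.1 hx' with h' | h'
          · exact absurd h' hxu
          · exact h'
        have hu1 : u ∈ T₁ := by rw [hTuv]; simp
        have hbv : b ∈ v := hmem b hbY fun hbu => (key u hu1).1 ⟨hau, hbu⟩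
        have hcv : c ∈ v := hmem c hcY fun hcu => (key u hu1).2.1 ⟨hau, hcu⟩
        have hdv : d ∈ v := hmem d hdY fun hdu => (key u hu1).2.2 ⟨hau, hdu⟩
        have hsubv : ({b, c, d} : Finset α) ⊆ v := by
          intro x hx
          simp only [Finset.mem_insert, Finset.mem_singleton] at hx
          rcases hx with rfl | rfl | rfl <;> assumption
        have h3 := card_three' hbc hbd hcd
        have := Finset.card_le_card hsubv
        omega
      have haPQ : a ∈ P ∪ Q := hPQu ▸ haY
      rcases Finset.mem_union.1 haPQ with h' | h'
      · exact main P Q hPQ hPQu (by omega) h'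
      · exact main Q P (hPQ.trans (Finset.pair_comm P Q))
          (by rw [Finset.union_comm]; exact hPQu) (by omega) h'
    rcases hne with hne | hne
    · refine ⟨{T₁, T₂}, ?_, ?_, ?_⟩
      · intro T hT
        simp only [Finset.mem_insert, Finset.mem_singleton] at hT
        rcases hT with rfl | rfl
        exacts [hT₁mem, hT₂mem]
      · exact (Finset.card_pair hne).ge
      · intro T hT
        simp only [Finset.mem_insert, Finset.mem_singleton] at hT
        rcases hT with rfl | rfl
        exacts [hT₁2, hT₂2]
    · refine ⟨{T₁, T₃}, ?_, ?_, ?_⟩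
      · intro T hT
        simp only [Finset.mem_insert, Finset.mem_singleton] at hT
        rcases hT with rfl | rfl
        exacts [hT₁mem, hT₃mem]
      · exact (Finset.card_pair hne).ge
      · intro T hT
        simp only [Finset.mem_insert, Finset.mem_singleton] at hT
        rcases hT with rfl | rfl
        exacts [hT₁2, hT₃2]


end InjectiveSplitSystems
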